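/- Let n ≥ 1, let (a_k)_{1≤k≤n+1} be a strictly increasing sequence of reals with a_1 = 0, and let (b_k)_{1≤k≤n} be a positive, monotone decreasing sequence. Let Q(n) be the interior of ⋃_{k=1}^{n} [a_k, a_{k+1}] × [0, b_k] ⊂ ℝ². Then the 1-dimensional Hausdorff measure of the topological frontier of Q(n) equals 2·a_{n+1} + 2·b_1. Consequently, if Σ_{k=1}^∞ b_k = S < ∞, then |vol₁(∂Q(n)) − Σ_{k=1}^{n} 2((a_{k+1}−a_k) + b_k)| ≤ 2S, i.e. the perimeter of the union differs from the sum of the rectangle perimeters by a bounded amount. -/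

import Mathlib

open Real MeasureTheory

/-- The closed rectangle `[a_k, a_{k+1}] × [0, b_k]` in the Euclidean plane. -/
def exampleRect (a b : ℕ → ℝ) (k : ℕ) : Set (EuclideanSpace ℝ (Fin 2)) :=
  {p | p 0 ∈ Set.Icc (a k) (a (k + 1)) ∧ p 1 ∈ Set.Icc 0 (b k)}

/-- The spectral core `Q(n)`: the interior of the union of the first `n`
rectangles `[a_k, a_{k+1}] × [0, b_k]`, `k = 1, …, n`. -/
def coreSet (a b : ℕ → ℝ) (n : ℕ) : Set (EuclideanSpace ℝ (Fin 2)) :=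
  interior (⋃ k ∈ Finset.Icc 1 n, exampleRect a b k)

namespace PerimAux

open Set

noncomputable section

abbrev E2 : Type := EuclideanSpace ℝ (Fin 2)

def pt (x y : ℝ) : E2 := WithLp.toLp 2 ![x, y]

@[simp] lemma pt_zero (x y : ℝ) : pt x y 0 = x := rfl
@[simp] lemma pt_one (x y : ℝ) : pt x y 1 = y := rfl

lemma pt_eta (p : E2) : pt (p 0) (p 1) = p := by
  apply PiLp.ext; intro i; fin_cases i <;> rfl

lemma eq_of_coords {p q : E2} (h0 : p 0 = q 0) (h1 : p 1 = q 1) : p = q := by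
  rw [← pt_eta p, ← pt_eta q, h0, h1]

lemma sqrt_sq_add_sq_le (u v : ℝ) : Real.sqrt (u^2 + v^2) ≤ |u| + |v| := by
  rw [show |u| + |v| = Real.sqrt ((|u| + |v|)^2) from (Real.sqrt_sq (by positivity)).symm]
  apply Real.sqrt_le_sqrt
  nlinarith [sq_abs u, sq_abs v, mul_nonneg (abs_nonneg u) (abs_nonneg v)]

lemma dist_pt_le (x y : ℝ) (p : E2) : dist (pt x y) p ≤ |x - p 0| + |y - p 1| := by
  rw [EuclideanSpace.dist_eq, Fin.sum_univ_two]
  simp only [pt_zero, pt_one, Real.dist_eq, sq_abs]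
  exact sqrt_sq_add_sq_le _ _

lemma isometry_hpt (c : ℝ) : Isometry (fun t : ℝ => pt t c) := by
  apply Isometry.of_dist_eq
  intro s t
  rw [EuclideanSpace.dist_eq, Fin.sum_univ_two]
  simp [Real.dist_eq, Real.sqrt_sq_eq_abs]

lemma isometry_vpt (c : ℝ) : Isometry (fun t : ℝ => pt c t) := by
  apply Isometry.of_dist_eq
  intro s t
  rw [EuclideanSpace.dist_eq, Fin.sum_univ_two]
  simp [Real.dist_eq, Real.sqrt_sq_eq_abs]

def segH (u v c : ℝ) : Set E2 := {p : E2 | p 0 ∈ Icc u v ∧ p 1 = c}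
def segV (c u v : ℝ) : Set E2 := {p : E2 | p 0 = c ∧ p 1 ∈ Icc u v}

lemma segH_eq_image (u v c : ℝ) : segH u v c = (fun t : ℝ => pt t c) '' Icc u v := by
  ext p
  constructor
  · rintro ⟨h0, h1⟩
    exact ⟨p 0, h0, by rw [← h1]; exact pt_eta p⟩
  · rintro ⟨t, ht, rfl⟩
    exact ⟨ht, rfl⟩

lemma segV_eq_image (c u v : ℝ) : segV c u v = (fun t : ℝ => pt c t) '' Icc u v := by
  ext p
  constructor
  · rintro ⟨h0, h1⟩
    exact ⟨p 1, h1, by rw [← h0]; exact pt_eta p⟩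
  · rintro ⟨t, ht, rfl⟩
    exact ⟨rfl, ht⟩

lemma measure_segH (u v c : ℝ) : μH[1] (segH u v c) = ENNReal.ofReal (v - u) := by
  rw [segH_eq_image, (isometry_hpt c).hausdorffMeasure_image (Or.inl zero_le_one),
    MeasureTheory.hausdorffMeasure_real, Real.volume_Icc]

lemma measure_segV (c u v : ℝ) : μH[1] (segV c u v) = ENNReal.ofReal (v - u) := by
  rw [segV_eq_image, (isometry_vpt c).hausdorffMeasure_image (Or.inl zero_le_one),
    MeasureTheory.hausdorffMeasure_real, Real.volume_Icc]

lemma isClosed_segH (u v c : ℝ) : IsClosed (segH u v c) := by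
  rw [segH_eq_image]; exact (isCompact_Icc.image (isometry_hpt c).continuous).isClosed

lemma isClosed_segV (c u v : ℝ) : IsClosed (segV c u v) := by
  rw [segV_eq_image]; exact (isCompact_Icc.image (isometry_vpt c).continuous).isClosed

instance : NullSingletonClass (μH[1] : Measure E2) := MeasureTheory.Measure.noAtoms_hausdorff E2 one_pos

lemma continuous_coord (i : Fin 2) : Continuous fun p : E2 => p i :=
  (EuclideanSpace.proj (𝕜 := ℝ) i).continuous

lemma null_pinned {s : Set E2} (x y : ℝ) (h : ∀ p ∈ s, p 0 = x ∧ p 1 = y) : μH[1] s = 0 :=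
  Set.Subsingleton.measure_zero
    (fun p hp q hq => eq_of_coords ((h p hp).1.trans ((h q hq).1).symm)
      ((h p hp).2.trans ((h q hq).2).symm)) _

lemma null_of_empty {s : Set E2} (h : ∀ p, p ∉ s) : μH[1] s = 0 := by
  have hs : s = ∅ := eq_empty_iff_forall_notMem.2 h
  simp [hs]

section Main

variable {a b : ℕ → ℝ} {n : ℕ}

def fullOpen (a b : ℕ → ℝ) (k : ℕ) : Set E2 :=
  {p : E2 | p 0 ∈ Ioo 0 (a (k+1)) ∧ p 1 ∈ Ioo 0 (b k)}

def stairU (a b : ℕ → ℝ) (n : ℕ) : Set E2 := ⋃ k ∈ Finset.Icc 1 n, exampleRect a b k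
def stairW (a b : ℕ → ℝ) (n : ℕ) : Set E2 := ⋃ k ∈ Finset.Icc 1 n, fullOpen a b k

def clo (b : ℕ → ℝ) (n k : ℕ) : ℝ := if k = n then 0 else b (k+1)

lemma astrict (hainc : ∀ k, 1 ≤ k → k ≤ n → a k < a (k + 1)) :
    ∀ j k, 1 ≤ j → j < k → k ≤ n + 1 → a j < a k := by
  intro j k hj
  induction k with
  | zero => intro h _; omega
  | succ m ih =>
    intro hjk hk
    rcases Nat.lt_or_ge j m with h | h
    · exact lt_trans (ih h (by omega)) (hainc m (by omega) (by omega))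
    · have hjm : j = m := by omega
      subst hjm
      exact hainc j hj (by omega)

lemma amono (hainc : ∀ k, 1 ≤ k → k ≤ n → a k < a (k + 1)) :
    ∀ j k, 1 ≤ j → j ≤ k → k ≤ n + 1 → a j ≤ a k := by
  intro j k hj hjk hk
  rcases eq_or_lt_of_le hjk with rfl | h
  · exact le_rfl
  · exact (astrict hainc j k hj h hk).le

lemma apos (ha1 : a 1 = 0) (hainc : ∀ k, 1 ≤ k → k ≤ n → a k < a (k + 1)) :
    ∀ k, 1 ≤ k → k ≤ n + 1 → 0 ≤ a k := by
  intro k h1 h2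
  calc (0:ℝ) = a 1 := ha1.symm
  _ ≤ a k := amono hainc 1 k le_rfl h1 h2

lemma bmono (hmono : ∀ k, 1 ≤ k → b (k + 1) ≤ b k) :
    ∀ j k, 1 ≤ j → j ≤ k → b k ≤ b j := by
  intro j k hj hjk
  induction k with
  | zero => exact absurd hjk (by omega)
  | succ m ih =>
    rcases Nat.lt_or_ge j (m+1) with h | h
    · exact le_trans (hmono m (by omega)) (ih (by omega))
    · have : j = m + 1 := by omega
      subst this
      exact le_rfl

lemma exists_idx (ha1 : a 1 = 0) (hainc : ∀ k, 1 ≤ k → k ≤ n → a k < a (k + 1))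
    (hn : 1 ≤ n) {x : ℝ} (hx0 : 0 ≤ x) (hx : x < a (n+1)) :
    ∃ k, 1 ≤ k ∧ k ≤ n ∧ a k ≤ x ∧ x < a (k+1) := by
  classical
  set K := Nat.findGreatest (fun k => a k ≤ x) n with hK
  have hP1 : a 1 ≤ x := by rw [ha1]; exact hx0
  have hK1 : 1 ≤ K := Nat.le_findGreatest (P := fun k => a k ≤ x) hn hP1
  have hKn : K ≤ n := Nat.findGreatest_le n
  have hPK : a K ≤ x := Nat.findGreatest_spec (P := fun k => a k ≤ x) hn hP1
  refine ⟨K, hK1, hKn, hPK, ?_⟩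
  by_contra hcon
  push_neg at hcon
  have hKn' : K ≠ n := by
    intro h
    rw [h] at hcon
    exact absurd hx (not_lt.2 hcon)
  exact Nat.findGreatest_is_greatest (P := fun k => a k ≤ x) (n := n) (k := K + 1) (by omega) (by omega) hcon

lemma mem_stairU {p : E2} : p ∈ stairU a b n ↔
    ∃ k, 1 ≤ k ∧ k ≤ n ∧ a k ≤ p 0 ∧ p 0 ≤ a (k+1) ∧ 0 ≤ p 1 ∧ p 1 ≤ b k := by
  constructor
  · intro h
    obtain ⟨k, hk, hmem⟩ := Set.mem_iUnion₂.1 h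
    rw [Finset.mem_Icc] at hk
    exact ⟨k, hk.1, hk.2, hmem.1.1, hmem.1.2, hmem.2.1, hmem.2.2⟩
  · rintro ⟨k, h1, h2, h3, h4, h5, h6⟩
    exact Set.mem_iUnion₂.2 ⟨k, Finset.mem_Icc.2 ⟨h1, h2⟩, ⟨⟨h3, h4⟩, h5, h6⟩⟩

lemma mem_stairW {p : E2} : p ∈ stairW a b n ↔
    ∃ k, 1 ≤ k ∧ k ≤ n ∧ 0 < p 0 ∧ p 0 < a (k+1) ∧ 0 < p 1 ∧ p 1 < b k := by
  constructor
  · intro h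
    obtain ⟨k, hk, hmem⟩ := Set.mem_iUnion₂.1 h
    rw [Finset.mem_Icc] at hk
    exact ⟨k, hk.1, hk.2, hmem.1.1, hmem.1.2, hmem.2.1, hmem.2.2⟩
  · rintro ⟨k, h1, h2, h3, h4, h5, h6⟩
    exact Set.mem_iUnion₂.2 ⟨k, Finset.mem_Icc.2 ⟨h1, h2⟩, ⟨⟨h3, h4⟩, h5, h6⟩⟩

lemma isOpen_fullOpen (k : ℕ) : IsOpen (fullOpen a b k) := by
  have h : fullOpen a b k =
      (fun p : E2 => p 0) ⁻¹' Ioo 0 (a (k+1)) ∩ (fun p : E2 => p 1) ⁻¹' Ioo 0 (b k) := rfl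
  rw [h]
  exact (isOpen_Ioo.preimage (continuous_coord 0)).inter (isOpen_Ioo.preimage (continuous_coord 1))

lemma isOpen_stairW : IsOpen (stairW a b n) :=
  isOpen_biUnion fun k _ => isOpen_fullOpen k

lemma isClosed_rect (k : ℕ) : IsClosed (exampleRect a b k) := by
  have h : exampleRect a b k =
      (fun p : E2 => p 0) ⁻¹' Icc (a k) (a (k+1)) ∩ (fun p : E2 => p 1) ⁻¹' Icc 0 (b k) := rfl
  rw [h]
  exact (isClosed_Icc.preimage (continuous_coord 0)).inter
    (isClosed_Icc.preimage (continuous_coord 1))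

lemma isClosed_stairU : IsClosed (stairU a b n) :=
  Set.Finite.isClosed_biUnion (Finset.finite_toSet _) fun k _ => isClosed_rect k

lemma stairW_subset (hn : 1 ≤ n) (ha1 : a 1 = 0)
    (hainc : ∀ k, 1 ≤ k → k ≤ n → a k < a (k + 1))
    (hmono : ∀ k, 1 ≤ k → b (k + 1) ≤ b k) :
    stairW a b n ⊆ stairU a b n := by
  intro p hp
  obtain ⟨k, hk1, hkn, hx0, hx1, hy0, hy1⟩ := mem_stairW.1 hp
  obtain ⟨j, hj1, hjn, hjx, hxj⟩ := exists_idx ha1 hainc hn hx0.le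
    (lt_of_lt_of_le hx1 (amono hainc (k+1) (n+1) (by omega) (by omega) (by omega)))
  have hjk : j ≤ k := by
    by_contra h
    push_neg at h
    have : a (k+1) ≤ a j := amono hainc (k+1) j (by omega) (by omega) (by omega)
    linarith
  exact mem_stairU.2 ⟨j, hj1, hjn, hjx, hxj.le, hy0.le,
    le_trans hy1.le (bmono hmono j k hj1 hjk)⟩

lemma interior_stairU (hn : 1 ≤ n) (ha1 : a 1 = 0)
    (hainc : ∀ k, 1 ≤ k → k ≤ n → a k < a (k + 1))
    (hmono : ∀ k, 1 ≤ k → b (k + 1) ≤ b k) :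
    interior (stairU a b n) = stairW a b n := by
  apply Subset.antisymm
  · intro p hp
    obtain ⟨ε, hε, hball⟩ := Metric.mem_nhds_iff.1 (mem_interior_iff_mem_nhds.1 hp)
    have hmem : ∀ x' y', |x' - p 0| + |y' - p 1| < ε → pt x' y' ∈ stairU a b n := by
      intro x' y' h
      exact hball (Metric.mem_ball.2 (lt_of_le_of_lt (dist_pt_le x' y' p) h))
    have hxpos : 0 < p 0 := by
      obtain ⟨k, hk1, hkn, h1, h2, h3, h4⟩ := mem_stairU.1 (hmem (p 0 - ε/2) (p 1)
        (by rw [show p 0 - ε / 2 - p 0 = -(ε/2) by ring, abs_neg,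
          abs_of_pos (half_pos hε), sub_self, abs_zero]; linarith))
      simp only [pt_zero, pt_one] at h1 h2 h3 h4
      have := apos ha1 hainc k hk1 (by omega)
      linarith
    have hypos : 0 < p 1 := by
      obtain ⟨k, hk1, hkn, h1, h2, h3, h4⟩ := mem_stairU.1 (hmem (p 0) (p 1 - ε/2)
        (by rw [show p 1 - ε / 2 - p 1 = -(ε/2) by ring, abs_neg,
          abs_of_pos (half_pos hε), sub_self, abs_zero]; linarith))
      simp only [pt_zero, pt_one] at h1 h2 h3 h4
      linarith
    have hxlt : p 0 < a (n+1) := by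
      obtain ⟨k, hk1, hkn, h1, h2, h3, h4⟩ := mem_stairU.1 (hmem (p 0 + ε/2) (p 1)
        (by rw [show p 0 + ε / 2 - p 0 = ε/2 by ring,
          abs_of_pos (half_pos hε), sub_self, abs_zero]; linarith))
      simp only [pt_zero, pt_one] at h1 h2 h3 h4
      have : a (k+1) ≤ a (n+1) := amono hainc (k+1) (n+1) (by omega) (by omega) (by omega)
      linarith
    obtain ⟨k, hk1, hkn, hkx, hxk⟩ := exists_idx ha1 hainc hn hxpos.le hxlt
    set δ := min (ε/4) ((a (k+1) - p 0)/2) with hδdef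
    have hδ1 : δ ≤ ε/4 := min_le_left _ _
    have hδ2 : δ ≤ (a (k+1) - p 0)/2 := min_le_right _ _
    have hδpos : 0 < δ := lt_min (by linarith) (by linarith)
    obtain ⟨j, hj1, hjn, hja, hjb, hjc, hjd⟩ := mem_stairU.1 (hmem (p 0 + δ) (p 1 + δ)
      (by rw [show p 0 + δ - p 0 = δ by ring, show p 1 + δ - p 1 = δ by ring,
        abs_of_pos hδpos]; linarith))
    simp only [pt_zero, pt_one] at hja hjb hjc hjd
    have hjk : j = k := by
      rcases lt_trichotomy j k with h | h | h
      · exfalso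
        have : a (j+1) ≤ a k := amono hainc (j+1) k (by omega) (by omega) (by omega)
        linarith
      · exact h
      · exfalso
        have : a (k+1) ≤ a j := amono hainc (k+1) j (by omega) (by omega) (by omega)
        linarith
    subst hjk
    exact mem_stairW.2 ⟨j, hk1, hkn, hxpos, hxk, hypos, by linarith⟩
  · exact interior_maximal (stairW_subset hn ha1 hainc hmono) isOpen_stairW

lemma stairU_subset_closure (ha1 : a 1 = 0)
    (hainc : ∀ k, 1 ≤ k → k ≤ n → a k < a (k + 1))
    (hb : ∀ k, 1 ≤ k → 0 < b k) :
    stairU a b n ⊆ closure (stairW a b n) := by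
  intro p hp
  obtain ⟨k, hk1, hkn, hx0, hx1, hy0, hy1⟩ := mem_stairU.1 hp
  set c : E2 := pt ((a k + a (k+1))/2) (b k / 2) with hc
  have hak : a k < a (k+1) := hainc k hk1 hkn
  have hbk : 0 < b k := hb k hk1
  have ha0 : 0 ≤ a k := apos ha1 hainc k hk1 (by omega)
  have hck : ∀ t ∈ Ioo (0:ℝ) 1, p + t • (c - p) ∈ stairW a b n := by
    intro t ht
    have h0 : (p + t • (c - p)) 0 = p 0 + t * ((a k + a (k+1))/2 - p 0) := by
      simp [hc, PiLp.add_apply, PiLp.smul_apply, PiLp.sub_apply, smul_eq_mul]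
    have h1 : (p + t • (c - p)) 1 = p 1 + t * (b k / 2 - p 1) := by
      simp [hc, PiLp.add_apply, PiLp.smul_apply, PiLp.sub_apply, smul_eq_mul]
    obtain ⟨ht0, ht1⟩ := ht
    refine mem_stairW.2 ⟨k, hk1, hkn, ?_, ?_, ?_, ?_⟩
    · rw [h0]; nlinarith
    · rw [h0]; nlinarith
    · rw [h1]; nlinarith
    · rw [h1]; nlinarith
  have htend : Filter.Tendsto (fun t : ℝ => p + t • (c - p)) (nhdsWithin 0 (Ioi 0)) (nhds p) := by
    have hcont : Continuous (fun t : ℝ => p + t • (c - p)) :=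
      continuous_const.add (continuous_id.smul continuous_const)
    have h := hcont.tendsto 0
    simp only [zero_smul, add_zero] at h
    exact h.mono_left nhdsWithin_le_nhds
  exact mem_closure_of_tendsto htend
    (Filter.eventually_of_mem (Ioo_mem_nhdsGT_of_mem ⟨le_refl (0:ℝ), one_pos⟩) hck)

lemma frontier_core (hn : 1 ≤ n) (ha1 : a 1 = 0)
    (hainc : ∀ k, 1 ≤ k → k ≤ n → a k < a (k + 1))
    (hb : ∀ k, 1 ≤ k → 0 < b k)
    (hmono : ∀ k, 1 ≤ k → b (k + 1) ≤ b k) :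
    frontier (coreSet a b n) = stairU a b n \ stairW a b n := by
  have hW : interior (stairU a b n) = stairW a b n := interior_stairU hn ha1 hainc hmono
  have hcore : coreSet a b n = interior (stairU a b n) := rfl
  have hclos : closure (interior (stairU a b n)) = stairU a b n := by
    apply Subset.antisymm
    · exact closure_minimal interior_subset isClosed_stairU
    · intro p hp
      have h := stairU_subset_closure ha1 hainc hb hp
      rwa [← hW] at h
  have hfr : frontier (interior (stairU a b n)) =
      closure (interior (stairU a b n)) \ interior (interior (stairU a b n)) := rfl
  rw [hcore, hfr, interior_interior, hclos, hW]

lemma F_eq (hn : 1 ≤ n) (ha1 : a 1 = 0)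
    (hainc : ∀ k, 1 ≤ k → k ≤ n → a k < a (k + 1))
    (hb : ∀ k, 1 ≤ k → 0 < b k)
    (hmono : ∀ k, 1 ≤ k → b (k + 1) ≤ b k) :
    stairU a b n \ stairW a b n =
      segH 0 (a (n+1)) 0 ∪ (segV 0 0 (b 1) ∪
        ((⋃ k ∈ Finset.Icc 1 n, segH (a k) (a (k+1)) (b k)) ∪
         (⋃ k ∈ Finset.Icc 1 n, segV (a (k+1)) (clo b n k) (b k)))) := by
  apply Subset.antisymm
  · rintro p ⟨hpU, hpW⟩
    obtain ⟨k₀, hk₀1, hk₀n, hx0, hx1, hy0, hy1⟩ := mem_stairU.1 hpU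
    have hWnot : ∀ k, 1 ≤ k → k ≤ n → ¬(0 < p 0 ∧ p 0 < a (k+1) ∧ 0 < p 1 ∧ p 1 < b k) := by
      intro k h1 h2 hcon
      exact hpW (mem_stairW.2 ⟨k, h1, h2, hcon.1, hcon.2.1, hcon.2.2.1, hcon.2.2.2⟩)
    by_cases hy : p 1 = 0
    · left
      exact ⟨⟨le_trans (apos ha1 hainc k₀ hk₀1 (by omega)) hx0,
        le_trans hx1 (amono hainc (k₀+1) (n+1) (by omega) (by omega) (by omega))⟩, hy⟩
    by_cases hx : p 0 = 0
    · right; left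
      exact ⟨hx, hy0, le_trans hy1 (bmono hmono 1 k₀ le_rfl hk₀1)⟩
    have hxpos : 0 < p 0 :=
      lt_of_le_of_ne (le_trans (apos ha1 hainc k₀ hk₀1 (by omega)) hx0) (Ne.symm hx)
    have hypos : 0 < p 1 := lt_of_le_of_ne hy0 (Ne.symm hy)
    by_cases hxr : p 0 = a (n+1)
    · have hk₀ : k₀ = n := by
        by_contra h
        have : a (k₀+1) < a (n+1) := astrict hainc (k₀+1) (n+1) (by omega) (by omega) (by omega)
        rw [hxr] at hx1; linarith
      right; right; right
      refine Set.mem_biUnion (Finset.mem_Icc.2 ⟨hn, le_rfl⟩) ?_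
      refine ⟨hxr, ?_, hk₀ ▸ hy1⟩
      unfold clo
      rw [if_pos rfl]
      exact hy0
    have hxlt : p 0 < a (n+1) := lt_of_le_of_ne
      (le_trans hx1 (amono hainc (k₀+1) (n+1) (by omega) (by omega) (by omega))) hxr
    obtain ⟨k, hk1, hkn, hkx, hxk⟩ := exists_idx ha1 hainc hn hxpos.le hxlt
    have hybk : b k ≤ p 1 := by
      by_contra h
      push_neg at h
      exact hWnot k hk1 hkn ⟨hxpos, hxk, hypos, h⟩
    by_cases hxa : p 0 = a k
    · have hk2 : 2 ≤ k := by
        by_contra h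
        have hk1' : k = 1 := by omega
        rw [hk1', ha1] at hxa
        exact hx hxa
      have hk₀le : k₀ ≤ k := by
        by_contra h; push_neg at h
        have : a k < a k₀ := astrict hainc k k₀ (by omega) h (by omega)
        linarith
      have hk₀ge : k ≤ k₀ + 1 := by
        by_contra h; push_neg at h
        have : a (k₀+1) < a k := astrict hainc (k₀+1) k (by omega) h (by omega)
        linarith
      rcases eq_or_lt_of_le hk₀le with hEq | hLt
      · right; right; left
        exact Set.mem_biUnion (Finset.mem_Icc.2 ⟨hk1, hkn⟩)
          ⟨⟨hkx, hxk.le⟩, le_antisymm (hEq ▸ hy1) hybk⟩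
      · have hkk : k = k₀ + 1 := by omega
        right; right; right
        refine Set.mem_biUnion (Finset.mem_Icc.2 ⟨hk₀1, hk₀n⟩) ?_
        refine ⟨by rw [hxa, hkk], ⟨?_, hy1⟩⟩
        unfold clo
        rw [if_neg (by omega)]
        exact hkk ▸ hybk
    · have hak : a k < p 0 := lt_of_le_of_ne hkx (Ne.symm hxa)
      have h1 : k₀ ≤ k := by
        by_contra h; push_neg at h
        have : a (k+1) ≤ a k₀ := amono hainc (k+1) k₀ (by omega) (by omega) (by omega)
        linarith
      have h2 : k ≤ k₀ := by
        by_contra h; push_neg at h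
        have : a (k₀+1) ≤ a k := amono hainc (k₀+1) k (by omega) (by omega) (by omega)
        linarith
      have hEq : k₀ = k := le_antisymm h1 h2
      right; right; left
      exact Set.mem_biUnion (Finset.mem_Icc.2 ⟨hk1, hkn⟩)
        ⟨⟨hkx, hxk.le⟩, le_antisymm (hEq ▸ hy1) hybk⟩
  · rintro p (hA | hB | hC | hD)
    · obtain ⟨⟨h0, h1⟩, hy⟩ := hA
      constructor
      · rcases eq_or_lt_of_le h1 with hEq | hLt
        · refine mem_stairU.2 ⟨n, hn, le_rfl, ?_, h1, hy.ge, by rw [hy]; exact (hb n hn).le⟩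
          rw [hEq]
          exact amono hainc n (n+1) hn (by omega) (by omega)
        · obtain ⟨k, hk1, hkn, hkx, hxk⟩ := exists_idx ha1 hainc hn h0 hLt
          exact mem_stairU.2 ⟨k, hk1, hkn, hkx, hxk.le, hy.ge, by rw [hy]; exact (hb k hk1).le⟩
      · intro hW
        obtain ⟨k, _, _, _, _, hy2, _⟩ := mem_stairW.1 hW
        rw [hy] at hy2
        exact lt_irrefl 0 hy2
    · obtain ⟨hx, hy0, hy1⟩ := hB
      refine ⟨mem_stairU.2 ⟨1, le_rfl, hn, by rw [hx, ha1], ?_, hy0, hy1⟩, ?_⟩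
      · rw [hx]
        exact apos ha1 hainc 2 (by omega) (by omega)
      · intro hW
        obtain ⟨k, _, _, hx2, _, _, _⟩ := mem_stairW.1 hW
        rw [hx] at hx2
        exact lt_irrefl 0 hx2
    · obtain ⟨k, hk, hp⟩ := Set.mem_iUnion₂.1 hC
      rw [Finset.mem_Icc] at hk
      obtain ⟨⟨h0, h1⟩, hy⟩ := hp
      refine ⟨mem_stairU.2 ⟨k, hk.1, hk.2, h0, h1, by rw [hy]; exact (hb k hk.1).le,
        le_of_eq hy⟩, ?_⟩
      intro hW
      obtain ⟨j, hj1, hjn, hjx0, hjx1, hjy0, hjy1⟩ := mem_stairW.1 hW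
      have hjk : j < k := by
        by_contra h; push_neg at h
        have : b j ≤ b k := bmono hmono k j hk.1 h
        rw [hy] at hjy1
        linarith
      have : a (j+1) ≤ a k := amono hainc (j+1) k (by omega) (by omega) (by omega)
      linarith
    · obtain ⟨k, hk, hp⟩ := Set.mem_iUnion₂.1 hD
      rw [Finset.mem_Icc] at hk
      obtain ⟨hx, hy0, hy1⟩ := hp
      have hclo : 0 ≤ clo b n k := by
        unfold clo
        split
        · exact le_rfl
        · exact (hb _ (by omega)).le
      refine ⟨mem_stairU.2 ⟨k, hk.1, hk.2, by rw [hx]; exact (hainc k hk.1 hk.2).le, hx.le,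
        le_trans hclo hy0, hy1⟩, ?_⟩
      intro hW
      obtain ⟨j, hj1, hjn, hjx0, hjx1, hjy0, hjy1⟩ := mem_stairW.1 hW
      have hkj : k < j := by
        by_contra h; push_neg at h
        have : a (j+1) ≤ a (k+1) := amono hainc (j+1) (k+1) (by omega) (by omega) (by omega)
        rw [hx] at hjx1
        linarith
      have hkn' : k ≠ n := by omega
      have hbj : b j ≤ b (k+1) := bmono hmono (k+1) j (by omega) (by omega)
      unfold clo at hy0
      rw [if_neg hkn'] at hy0
      linarith

lemma tele (f : ℕ → ℝ) (n : ℕ) :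
    ∑ k ∈ Finset.Icc 1 n, (f (k+1) - f k) = f (n+1) - f 1 := by
  induction n with
  | zero => rw [Finset.Icc_eq_empty (by omega)]; simp
  | succ m ih => rw [Finset.sum_Icc_succ_top (by omega : 1 ≤ m+1), ih]; ring

lemma sumD (hn : 1 ≤ n) : ∑ k ∈ Finset.Icc 1 n, (b k - clo b n k) = b 1 := by
  have hsplit : ∀ k ∈ Finset.Icc 1 n, b k - clo b n k
      = (-(b (k+1) - b k)) + (if k = n then b (k+1) else 0) := by
    intro k _
    unfold clo
    by_cases h : k = n
    · rw [if_pos h, if_pos h]; ring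
    · rw [if_neg h, if_neg h]; ring
  rw [Finset.sum_congr rfl hsplit, Finset.sum_add_distrib, Finset.sum_neg_distrib, tele b n,
    Finset.sum_ite_eq' (Finset.Icc 1 n) n (fun k => b (k+1)),
    if_pos (Finset.mem_Icc.2 ⟨hn, le_rfl⟩)]
  ring

lemma null_inter_biUnion {s : Finset ℕ} {f : ℕ → Set E2} (X : Set E2)
    (h : ∀ k ∈ s, μH[1] (X ∩ f k) = 0) : μH[1] (X ∩ ⋃ k ∈ s, f k) = 0 := by
  rw [Set.inter_iUnion₂, ← Finset.set_biUnion_coe]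
  exact (measure_biUnion_null_iff s.countable_toSet).2 fun i hi => h i (Finset.mem_coe.1 hi)

end Main

end
end PerimAux

open PerimAux

/-- For `n ≥ 1`, `(a_k)_{1 ≤ k ≤ n+1}` strictly increasing with `a_1 = 0` and
`(b_k)_{k ≥ 1}` positive monotone decreasing, the `1`-dimensional Hausdorff
measure of the frontier of `Q(n)` equals `2·a_{n+1} + 2·b_1`; consequently, if
`Σ_{k≥1} b_k = S < ∞`, the perimeter of `Q(n)` differs from the sum
`Σ_{k=1}^n 2((a_{k+1} − a_k) + b_k)` of the rectangle perimeters by at most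
`2S`. -/
theorem perimeter_of_core (n : ℕ) (hn : 1 ≤ n) (a b : ℕ → ℝ)
    (ha1 : a 1 = 0) (hainc : ∀ k, 1 ≤ k → k ≤ n → a k < a (k + 1))
    (hb : ∀ k, 1 ≤ k → 0 < b k)
    (hmono : ∀ k, 1 ≤ k → b (k + 1) ≤ b k) :
    μH[1] (frontier (coreSet a b n)) =
      ENNReal.ofReal (2 * a (n + 1) + 2 * b 1) ∧
    (Summable (fun k : ℕ => b (k + 1)) →
      |(μH[1] (frontier (coreSet a b n))).toReal -
          ∑ k ∈ Finset.Icc 1 n, 2 * ((a (k + 1) - a k) + b k)| ≤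
        2 * ∑' k : ℕ, b (k + 1)) := by
  classical
  have hA0 : 0 ≤ a (n+1) := apos ha1 hainc (n+1) (by omega) (by omega)
  have hB0 : 0 ≤ b 1 := (hb 1 le_rfl).le
  have hFr : frontier (coreSet a b n) =
      segH 0 (a (n+1)) 0 ∪ (segV 0 0 (b 1) ∪
        ((⋃ k ∈ Finset.Icc 1 n, segH (a k) (a (k+1)) (b k)) ∪
         (⋃ k ∈ Finset.Icc 1 n, segV (a (k+1)) (clo b n k) (b k)))) := by
    rw [frontier_core hn ha1 hainc hb hmono, F_eq hn ha1 hainc hb hmono]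
  -- null pairwise intersections
  have hCDnull : ∀ j, ∀ k, μH[1] (segH (a j) (a (j+1)) (b j) ∩
      segV (a (k+1)) (clo b n k) (b k)) = 0 := by
    intro j k
    refine null_pinned (a (k+1)) (b j) ?_
    rintro p ⟨hpC, hpD⟩
    exact ⟨hpD.1, hpC.2⟩
  have hCCnull : ∀ j ∈ Finset.Icc 1 n, ∀ k ∈ Finset.Icc 1 n, j ≠ k →
      μH[1] (segH (a j) (a (j+1)) (b j) ∩ segH (a k) (a (k+1)) (b k)) = 0 := by
    intro j hj k hk hjk
    rw [Finset.mem_Icc] at hj hk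
    rcases lt_or_gt_of_ne hjk with h | h
    · refine null_pinned (a k) (b j) ?_
      rintro p ⟨hpj, hpk⟩
      have h1 : a (j+1) ≤ a k := amono hainc (j+1) k (by omega) (by omega) (by omega)
      exact ⟨le_antisymm (le_trans hpj.1.2 h1) hpk.1.1, hpj.2⟩
    · refine null_pinned (a j) (b j) ?_
      rintro p ⟨hpj, hpk⟩
      have h1 : a (k+1) ≤ a j := amono hainc (k+1) j (by omega) (by omega) (by omega)
      exact ⟨le_antisymm (le_trans hpk.1.2 h1) hpj.1.1, hpj.2⟩
  have hDDnull : ∀ j ∈ Finset.Icc 1 n, ∀ k ∈ Finset.Icc 1 n, j ≠ k →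
      μH[1] (segV (a (j+1)) (clo b n j) (b j) ∩ segV (a (k+1)) (clo b n k) (b k)) = 0 := by
    intro j hj k hk hjk
    rw [Finset.mem_Icc] at hj hk
    refine null_of_empty ?_
    rintro p ⟨hpj, hpk⟩
    have h1 := hpj.1
    have h2 := hpk.1
    rcases lt_or_gt_of_ne hjk with h | h
    · have : a (j+1) < a (k+1) := astrict hainc (j+1) (k+1) (by omega) (by omega) (by omega)
      rw [h1] at h2; linarith
    · have : a (k+1) < a (j+1) := astrict hainc (k+1) (j+1) (by omega) (by omega) (by omega)
      rw [h1] at h2; linarith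
  have hABnull : μH[1] (segH 0 (a (n+1)) 0 ∩ segV 0 0 (b 1)) = 0 := by
    refine null_pinned 0 0 ?_
    rintro p ⟨h1, h2⟩
    exact ⟨h2.1, h1.2⟩
  have hACnull : ∀ k ∈ Finset.Icc 1 n,
      μH[1] (segH 0 (a (n+1)) 0 ∩ segH (a k) (a (k+1)) (b k)) = 0 := by
    intro k hk
    rw [Finset.mem_Icc] at hk
    refine null_of_empty ?_
    rintro p ⟨h1, h2⟩
    have := hb k hk.1
    have e1 := h1.2
    have e2 := h2.2
    rw [e1] at e2
    linarith
  have hADnull : ∀ k ∈ Finset.Icc 1 n,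
      μH[1] (segH 0 (a (n+1)) 0 ∩ segV (a (k+1)) (clo b n k) (b k)) = 0 := by
    intro k _
    refine null_pinned (a (k+1)) 0 ?_
    rintro p ⟨h1, h2⟩
    exact ⟨h2.1, h1.2⟩
  have hBCnull : ∀ k ∈ Finset.Icc 1 n,
      μH[1] (segV 0 0 (b 1) ∩ segH (a k) (a (k+1)) (b k)) = 0 := by
    intro k _
    refine null_pinned 0 (b k) ?_
    rintro p ⟨h1, h2⟩
    exact ⟨h1.1, h2.2⟩
  have hBDnull : ∀ k ∈ Finset.Icc 1 n,
      μH[1] (segV 0 0 (b 1) ∩ segV (a (k+1)) (clo b n k) (b k)) = 0 := by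
    intro k hk
    rw [Finset.mem_Icc] at hk
    refine null_of_empty ?_
    rintro p ⟨h1, h2⟩
    have hpos : a 1 < a (k+1) := astrict hainc 1 (k+1) le_rfl (by omega) (by omega)
    rw [ha1] at hpos
    have e1 := h1.1
    have e2 := h2.1
    rw [e1] at e2
    linarith
  -- measurability
  have hmCU : NullMeasurableSet (⋃ k ∈ Finset.Icc 1 n, segH (a k) (a (k+1)) (b k)) μH[1] :=
    (MeasurableSet.biUnion (Finset.Icc 1 n).countable_toSet
      fun k _ => (isClosed_segH _ _ _).measurableSet).nullMeasurableSet
  have hmDU : NullMeasurableSet (⋃ k ∈ Finset.Icc 1 n, segV (a (k+1)) (clo b n k) (b k)) μH[1] :=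
    (MeasurableSet.biUnion (Finset.Icc 1 n).countable_toSet
      fun k _ => (isClosed_segV _ _ _).measurableSet).nullMeasurableSet
  have hmB : NullMeasurableSet (segV 0 0 (b 1)) μH[1] :=
    (isClosed_segV _ _ _).measurableSet.nullMeasurableSet
  -- union measures
  have hCU : μH[1] (⋃ k ∈ Finset.Icc 1 n, segH (a k) (a (k+1)) (b k))
      = ENNReal.ofReal (a (n+1) - a 1) := by
    rw [measure_biUnion_finset₀
        (fun j hj k hk hjk => hCCnull j (Finset.mem_coe.1 hj) k (Finset.mem_coe.1 hk) hjk)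
        (fun k _ => (isClosed_segH _ _ _).measurableSet.nullMeasurableSet),
      Finset.sum_congr rfl (fun k _ => measure_segH (a k) (a (k+1)) (b k)),
      ← ENNReal.ofReal_sum_of_nonneg (fun k hk => by
        rw [Finset.mem_Icc] at hk
        linarith [hainc k hk.1 hk.2]),
      tele a n]
  have hDU : μH[1] (⋃ k ∈ Finset.Icc 1 n, segV (a (k+1)) (clo b n k) (b k))
      = ENNReal.ofReal (b 1) := by
    rw [measure_biUnion_finset₀
        (fun j hj k hk hjk => hDDnull j (Finset.mem_coe.1 hj) k (Finset.mem_coe.1 hk) hjk)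
        (fun k _ => (isClosed_segV _ _ _).measurableSet.nullMeasurableSet),
      Finset.sum_congr rfl (fun k _ => measure_segV (a (k+1)) (clo b n k) (b k)),
      ← ENNReal.ofReal_sum_of_nonneg (fun k hk => by
        rw [Finset.mem_Icc] at hk
        unfold clo
        split
        · linarith [hb k hk.1]
        · linarith [hmono k hk.1]),
      sumD hn]
  -- disjointness at the union level
  have hCUDU : μH[1] ((⋃ k ∈ Finset.Icc 1 n, segH (a k) (a (k+1)) (b k)) ∩
      (⋃ k ∈ Finset.Icc 1 n, segV (a (k+1)) (clo b n k) (b k))) = 0 := by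
    apply null_inter_biUnion
    intro k _
    rw [Set.inter_comm]
    apply null_inter_biUnion
    intro j _
    rw [Set.inter_comm]
    exact hCDnull j k
  have hBrest : μH[1] (segV 0 0 (b 1) ∩
      ((⋃ k ∈ Finset.Icc 1 n, segH (a k) (a (k+1)) (b k)) ∪
       (⋃ k ∈ Finset.Icc 1 n, segV (a (k+1)) (clo b n k) (b k)))) = 0 := by
    rw [Set.inter_union_distrib_left]
    exact measure_union_null (null_inter_biUnion _ hBCnull) (null_inter_biUnion _ hBDnull)
  have hArest : μH[1] (segH 0 (a (n+1)) 0 ∩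
      (segV 0 0 (b 1) ∪
        ((⋃ k ∈ Finset.Icc 1 n, segH (a k) (a (k+1)) (b k)) ∪
         (⋃ k ∈ Finset.Icc 1 n, segV (a (k+1)) (clo b n k) (b k))))) = 0 := by
    rw [Set.inter_union_distrib_left, Set.inter_union_distrib_left]
    exact measure_union_null hABnull
      (measure_union_null (null_inter_biUnion _ hACnull) (null_inter_biUnion _ hADnull))
  have key : μH[1] (frontier (coreSet a b n)) = ENNReal.ofReal (2 * a (n + 1) + 2 * b 1) := by
    rw [hFr,
      measure_union₀ (hmB.union (hmCU.union hmDU)) hArest,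
      measure_union₀ (hmCU.union hmDU) hBrest,
      measure_union₀ hmDU hCUDU,
      measure_segH, measure_segV, hCU, hDU, ha1, sub_zero, sub_zero,
      ← ENNReal.ofReal_add hA0 hB0, ← ENNReal.ofReal_add hB0 (by linarith),
      ← ENNReal.ofReal_add hA0 (by linarith)]
    congr 1
    ring
  refine ⟨key, ?_⟩
  intro hsum
  rw [key, ENNReal.toReal_ofReal (by linarith)]
  have hsum1 : ∑ k ∈ Finset.Icc 1 n, 2 * ((a (k+1) - a k) + b k)
      = 2 * (a (n+1) - a 1) + 2 * ∑ k ∈ Finset.Icc 1 n, b k := by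
    calc ∑ k ∈ Finset.Icc 1 n, 2 * ((a (k+1) - a k) + b k)
        = ∑ k ∈ Finset.Icc 1 n, (2 * (a (k+1) - a k) + 2 * b k) :=
          Finset.sum_congr rfl (fun k _ => by ring)
      _ = ∑ k ∈ Finset.Icc 1 n, 2 * (a (k+1) - a k)
          + ∑ k ∈ Finset.Icc 1 n, 2 * b k := Finset.sum_add_distrib
      _ = 2 * ∑ k ∈ Finset.Icc 1 n, (a (k+1) - a k)
          + 2 * ∑ k ∈ Finset.Icc 1 n, b k := by rw [← Finset.mul_sum, ← Finset.mul_sum]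
      _ = 2 * (a (n+1) - a 1) + 2 * ∑ k ∈ Finset.Icc 1 n, b k := by rw [tele a n]
  have hS2 : ∑ k ∈ Finset.Icc 1 n, b k = b 1 + ∑ k ∈ Finset.Icc 2 n, b k := by
    have hins : Finset.Icc 1 n = insert 1 (Finset.Icc 2 n) := by
      ext x
      simp only [Finset.mem_Icc, Finset.mem_insert]
      omega
    rw [hins, Finset.sum_insert (by simp)]
  have hrest0 : 0 ≤ ∑ k ∈ Finset.Icc 2 n, b k :=
    Finset.sum_nonneg fun k hk => (hb k (by rw [Finset.mem_Icc] at hk; omega)).le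
  have hrest : ∑ k ∈ Finset.Icc 2 n, b k ≤ ∑' k, b (k+1) := by
    have hmap : ∑ k ∈ Finset.Icc 2 n, b k = ∑ j ∈ Finset.Icc 1 (n-1), b (j+1) := by
      rw [show (2:ℕ) = 1 + 1 from rfl, show n = (n-1) + 1 by omega,
        ← Finset.map_add_right_Icc, Finset.sum_map]
      simp [addRightEmbedding_apply]
    rw [hmap]
    exact Summable.sum_le_tsum _ (fun i _ => (hb (i+1) (by omega)).le) hsum
  rw [hsum1, hS2, ha1]
  have habs : 2 * a (n+1) + 2 * b 1
      - (2 * (a (n+1) - 0) + 2 * (b 1 + ∑ k ∈ Finset.Icc 2 n, b k))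
      = -(2 * ∑ k ∈ Finset.Icc 2 n, b k) := by ring
  rw [habs, abs_neg, abs_of_nonneg (by linarith)]
  linarith
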